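/- In the category of sets and matchings, the kernel of a morphism σ : S ⇸ T exists and is given by the set K = {s ∈ S | s is unmatched by σ} together with the inclusion matching K ⇸ S; i.e., this inclusion satisfies the universal property of the kernel (the equalizer of σ and the zero morphism). -/

import Mathlib

open CategoryTheory

/-- A matching (partial injective function) between `S` and `T`, viewed as a relation. -/
def IsMatching {S T : Type*} (σ : S → T → Prop) : Prop :=
  (∀ s t t', σ s t → σ s t' → t = t') ∧ (∀ s s' t, σ s t → σ s' t → s = s')

/-- Relational composition. -/
def compM {S T U : Type*} (σ : S → T → Prop) (τ : T → U → Prop) : S → U → Prop :=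
  fun s u => ∃ t, σ s t ∧ τ t u

theorem isMatching_id {S : Type*} : IsMatching (Eq : S → S → Prop) :=
  ⟨fun _ _ _ h h' => h.symm.trans h', fun _ _ _ h h' => h.trans h'.symm⟩

theorem isMatching_comp {S T U : Type*} {σ : S → T → Prop} {τ : T → U → Prop}
    (hσ : IsMatching σ) (hτ : IsMatching τ) : IsMatching (compM σ τ) := by
  obtain ⟨h1, h2⟩ := hσ; obtain ⟨g1, g2⟩ := hτ
  constructor
  · rintro s u u' ⟨t, hst, htu⟩ ⟨t', hst', ht'u'⟩
    exact g1 _ _ _ ((h1 _ _ _ hst hst') ▸ htu) ht'u'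
  · rintro s s' u ⟨t, hst, htu⟩ ⟨t', hst', ht'u'⟩
    exact h2 _ _ _ hst ((g2 _ _ _ ht'u' htu) ▸ hst')

/-- Objects of the category `Match` of sets and matchings. -/
structure MatchCat : Type 1 where
  carrier : Type

/-- The category with sets as objects and matchings (partial injective functions) as
morphisms, composed relationally. -/
instance : Category MatchCat where
  Hom S T := {σ : S.carrier → T.carrier → Prop // IsMatching σ}
  id S := ⟨Eq, isMatching_id⟩
  comp f g := ⟨compM f.1 g.1, isMatching_comp f.2 g.2⟩
  id_comp f := by
    apply Subtype.ext; funext s u; apply propext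
    exact ⟨fun ⟨t, h, h'⟩ => h ▸ h', fun h => ⟨s, rfl, h⟩⟩
  comp_id f := by
    apply Subtype.ext; funext s u; apply propext
    exact ⟨fun ⟨t, h, h'⟩ => h' ▸ h, fun h => ⟨u, h, rfl⟩⟩
  assoc f g h := by
    apply Subtype.ext; funext s v; apply propext
    constructor
    · rintro ⟨u, ⟨t, hst, htu⟩, huv⟩; exact ⟨t, hst, u, htu, huv⟩
    · rintro ⟨t, hst, u, htu, huv⟩; exact ⟨u, ⟨t, hst, htu⟩, huv⟩

/-- The zero morphism (empty matching). -/
def zeroM (S T : MatchCat) : S ⟶ T :=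
  ⟨fun _ _ => False, ⟨fun _ _ _ h => h.elim, fun _ _ _ h => h.elim⟩⟩

/-- The inclusion matching of the set of unmatched elements of the source of `σ`. -/
def kerIncl {S T : MatchCat} (σ : S ⟶ T) :
    MatchCat.mk {s : S.carrier // ¬ ∃ t, σ.1 s t} ⟶ S :=
  ⟨fun k s => k.1 = s,
    ⟨fun _ _ _ h h' => h.symm.trans h', fun _ _ _ h h' => Subtype.ext (h.trans h'.symm)⟩⟩

/-- in the category of sets and matchings, the kernel of a morphism
`σ : S ⇸ T` exists and is given by the set `K = {s ∈ S | s is unmatched by σ}` together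
with the inclusion matching `K ⇸ S`: this inclusion composes with `σ` to the zero
morphism, and every morphism `α` with `α ≫ σ = 0` factors uniquely through it
(the universal property of the equalizer of `σ` and the zero morphism). -/
theorem match_kernel {S T : MatchCat} (σ : S ⟶ T) :
    kerIncl σ ≫ σ = zeroM _ _ ∧
    ∀ (A : MatchCat) (α : A ⟶ S), α ≫ σ = zeroM _ _ →
      ∃! α' : A ⟶ MatchCat.mk {s : S.carrier // ¬ ∃ t, σ.1 s t}, α' ≫ kerIncl σ = α := by
  constructor
  · apply Subtype.ext; funext k t; apply propext
    constructor
    · rintro ⟨s, hks, hst⟩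
      exact k.2 ⟨t, hks ▸ hst⟩
    · exact fun h => h.elim
  · intro A α hα
    have key : ∀ a s, α.1 a s → ¬ ∃ t, σ.1 s t := by
      intro a s has ⟨t, hst⟩
      have := congrArg (fun f => f.1 a t) hα
      simp only [zeroM] at this
      exact this ▸ ⟨s, has, hst⟩
    refine ⟨⟨fun a k => α.1 a k.1, ⟨?_, ?_⟩⟩, ?_, ?_⟩
    · intro a k k' h h'
      exact Subtype.ext (α.2.1 a _ _ h h')
    · intro a a' k h h'
      exact α.2.2 a a' k.1 h h'
    · apply Subtype.ext; funext a s; apply propext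
      constructor
      · rintro ⟨k, hak, hks⟩
        exact hks ▸ hak
      · intro h
        exact ⟨⟨s, key a s h⟩, h, rfl⟩
    · intro β hβ
      apply Subtype.ext; funext a k; apply propext
      have hb : ∀ a k, β.1 a k ↔ α.1 a k.1 := by
        intro a k
        have := congrArg (fun f => f.1 a k.1) hβ
        change (β ≫ kerIncl σ).1 a k.1 = α.1 a k.1 at this
        rw [← this]
        exact ⟨fun h => ⟨k, h, rfl⟩, fun ⟨k', h, h'⟩ => (Subtype.ext h' : k' = k) ▸ h⟩
      exact hb a k
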